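/- Let a : ℝ → ℝ be continuous and nondecreasing, let T > 0, s₀ ∈ (0, T], and w ∈ ℝ. Define Y(t) = w·e^{a(t)} if t < s₀ and Y(t) = 0 otherwise, and Z(t) = −w·e^{a(t)}. Let μ_N be the Lebesgue–Stieltjes measure of the nondecreasing right-continuous function t ↦ 1_{[s₀,∞)}(t), and μ_A the Lebesgue–Stieltjes measure of the nondecreasing continuous function t ↦ a(min(t, s₀)). Then for every t ∈ [0, T]: Y(t) + ∫_{(t,T]} Z(s) μ_N(ds) = ∫_{(t,T]} Z(s) μ_A(ds). -/

import Mathlib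

open MeasureTheory

/-- For a continuous Stieltjes function `b` and `y` between `b t` and `b u`, the level set
`{s ∈ [t,u] | b s ≤ y}` is an interval `[t, α]` with `b α = y`. -/
lemma stieltjes_exists_max_level (b : StieltjesFunction ℝ) (hb : Continuous b)
    {t u y : ℝ} (htu : t ≤ u) (h1 : b t ≤ y) (h2 : y ≤ b u) :
    ∃ α ∈ Set.Icc t u, b α = y ∧ ∀ s ∈ Set.Icc t u, (s ≤ α ↔ b s ≤ y) := by
  set K : Set ℝ := Set.Icc t u ∩ {s | b s ≤ y} with hK
  have hKne : K.Nonempty := ⟨t, ⟨le_refl t, htu⟩, h1⟩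
  have hKbdd : BddAbove K := bddAbove_Icc.mono Set.inter_subset_left
  have hKclosed : IsClosed K := isClosed_Icc.inter (isClosed_le hb continuous_const)
  set α := sSup K with hα
  have hαK : α ∈ K := hKclosed.csSup_mem hKne hKbdd
  have hαIcc : α ∈ Set.Icc t u := hαK.1
  have hbαy : b α ≤ y := hαK.2
  have hyα : y ≤ b α := by
    rcases eq_or_lt_of_le hαIcc.2 with h | h
    · rw [h]; exact h2
    · have hev : ∀ᶠ s in nhdsWithin α (Set.Ioi α), y ≤ b s := by
        filter_upwards [Ioo_mem_nhdsGT_of_mem (Set.left_mem_Ico.mpr h)] with s hs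
        by_contra hc
        push_neg at hc
        have hsK : s ∈ K := ⟨⟨le_trans hαIcc.1 hs.1.le, hs.2.le⟩, hc.le⟩
        exact absurd (le_csSup hKbdd hsK) (not_le.mpr hs.1)
      have htend : Filter.Tendsto b (nhdsWithin α (Set.Ioi α)) (nhds (b α)) :=
        (hb.tendsto α).mono_left nhdsWithin_le_nhds
      have hne : (nhdsWithin α (Set.Ioi α)).NeBot := by
        exact nhdsGT_neBot α
      exact ge_of_tendsto htend hev
  have hbα : b α = y := le_antisymm hbαy hyα
  refine ⟨α, hαIcc, hbα, fun s hs => ⟨fun h' => ?_, fun h' => le_csSup hKbdd ⟨hs, h'⟩⟩⟩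
  calc b s ≤ b α := b.mono h'
    _ = y := hbα

/-- Change of variables: the pushforward under a continuous Stieltjes function `b` of its
Lebesgue–Stieltjes measure restricted to `(t, u]` is Lebesgue measure on `(b t, b u]`. -/
lemma stieltjes_map_restrict (b : StieltjesFunction ℝ) (hb : Continuous b)
    {t u : ℝ} (htu : t ≤ u) :
    Measure.map b (b.measure.restrict (Set.Ioc t u))
      = volume.restrict (Set.Ioc (b t) (b u)) := by
  have hmb : Measurable b := hb.measurable
  haveI : IsFiniteMeasure (b.measure.restrict (Set.Ioc t u)) := by
    constructor
    rw [Measure.restrict_apply_univ, b.measure_Ioc]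
    exact ENNReal.ofReal_lt_top
  haveI : IsFiniteMeasure (Measure.map b (b.measure.restrict (Set.Ioc t u))) :=
    Measure.isFiniteMeasure_map _ _
  refine Measure.ext_of_Ioc_finite _ _ ?_ (fun c d _hcd => ?_)
  · rw [Measure.map_apply hmb MeasurableSet.univ, Set.preimage_univ,
      Measure.restrict_apply_univ, Measure.restrict_apply_univ, b.measure_Ioc,
      Real.volume_Ioc]
  · rw [Measure.map_apply hmb measurableSet_Ioc,
      Measure.restrict_apply (hmb measurableSet_Ioc),
      Measure.restrict_apply measurableSet_Ioc, Set.Ioc_inter_Ioc, Real.volume_Ioc]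
    set c' := max c (b t) with hc'
    set d' := min d (b u) with hd'
    by_cases hcd' : c' ≤ d'
    · have hbtd' : b t ≤ d' := le_trans (le_max_right c (b t)) hcd'
      have hd'bu : d' ≤ b u := min_le_right d (b u)
      obtain ⟨β, hβIcc, hbβ, hβiff⟩ := stieltjes_exists_max_level b hb htu hbtd' hd'bu
      by_cases hc : c < b t
      · -- here `c' = b t` and the preimage set is `Ioc t β`
        have hset : b ⁻¹' Set.Ioc c d ∩ Set.Ioc t u = Set.Ioc t β := by
          ext s
          simp only [Set.mem_inter_iff, Set.mem_preimage, Set.mem_Ioc]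
          constructor
          · rintro ⟨⟨_hcs, hsd⟩, hts, hsu⟩
            exact ⟨hts, (hβiff s ⟨hts.le, hsu⟩).mpr (le_min hsd (b.mono hsu))⟩
          · rintro ⟨hts, hsβ⟩
            have hsu : s ≤ u := hsβ.trans hβIcc.2
            have hbs : b s ≤ d' := hbβ ▸ b.mono hsβ
            exact ⟨⟨lt_of_lt_of_le hc (b.mono hts.le), hbs.trans (min_le_left d (b u))⟩,
              hts, hsu⟩
        rw [hset, b.measure_Ioc, hbβ]
        congr 1
        rw [hc', max_eq_right hc.le]
      · push_neg at hc
        have hcu : c ≤ b u := le_trans (le_trans (le_max_left c (b t)) hcd') hd'bu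
        obtain ⟨α, hαIcc, hbα, hαiff⟩ := stieltjes_exists_max_level b hb htu hc hcu
        have hset : b ⁻¹' Set.Ioc c d ∩ Set.Ioc t u = Set.Ioc α β := by
          ext s
          simp only [Set.mem_inter_iff, Set.mem_preimage, Set.mem_Ioc]
          constructor
          · rintro ⟨⟨hcs, hsd⟩, hts, hsu⟩
            refine ⟨?_, (hβiff s ⟨hts.le, hsu⟩).mpr (le_min hsd (b.mono hsu))⟩
            by_contra hsa
            push_neg at hsa
            exact absurd ((hαiff s ⟨hts.le, hsu⟩).mp hsa) (not_le.mpr hcs)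
          · rintro ⟨hαs, hsβ⟩
            have hts : t < s := lt_of_le_of_lt hαIcc.1 hαs
            have hsu : s ≤ u := hsβ.trans hβIcc.2
            have hbs : b s ≤ d' := hbβ ▸ b.mono hsβ
            refine ⟨⟨?_, hbs.trans (min_le_left d (b u))⟩, hts, hsu⟩
            by_contra hbs'
            push_neg at hbs'
            exact absurd ((hαiff s ⟨hts.le, hsu⟩).mpr hbs') (not_le.mpr hαs)
        rw [hset, b.measure_Ioc, hbβ, hbα]
        congr 1
        rw [hc', max_eq_left hc]
    · push_neg at hcd'
      have hset : b ⁻¹' Set.Ioc c d ∩ Set.Ioc t u = ∅ := by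
        ext s
        simp only [Set.mem_inter_iff, Set.mem_preimage, Set.mem_Ioc, Set.mem_empty_iff_false,
          iff_false, not_and, and_imp]
        intro hcs hsd hts hsu
        have h1 : c' ≤ b s := max_le hcs.le (b.mono hts.le)
        have h2 : b s ≤ d' := le_min hsd (b.mono hsu)
        exact absurd (h1.trans h2) (not_le.mpr hcd')
      rw [hset, measure_empty, ENNReal.ofReal_eq_zero.mpr (by linarith)]

/-- The Lebesgue–Stieltjes measure of the unit step at `s₀` is the Dirac mass at `s₀`. -/
lemma stieltjes_step_eq_dirac (G : StieltjesFunction ℝ) (s₀ : ℝ)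
    (hG : ∀ t, G t = if s₀ ≤ t then 1 else 0) : G.measure = Measure.dirac s₀ := by
  have hbot : Filter.Tendsto G Filter.atBot (nhds 0) := by
    refine Filter.Tendsto.congr' ?_ tendsto_const_nhds
    filter_upwards [Filter.eventually_lt_atBot s₀] with t ht
    rw [hG t, if_neg (not_le.mpr ht)]
  have htop : Filter.Tendsto G Filter.atTop (nhds 1) := by
    refine Filter.Tendsto.congr' ?_ tendsto_const_nhds
    filter_upwards [Filter.eventually_ge_atTop s₀] with t ht
    rw [hG t, if_pos ht]
  haveI := G.isFiniteMeasure hbot htop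
  refine Measure.ext_of_Ioc_finite _ _ ?_ (fun c d hcd => ?_)
  · rw [G.measure_univ hbot htop]
    simp
  · rw [G.measure_Ioc, Measure.dirac_apply' _ measurableSet_Ioc, hG, hG]
    by_cases h1 : s₀ ≤ d
    · by_cases h2 : s₀ ≤ c
      · rw [if_pos h1, if_pos h2, sub_self, ENNReal.ofReal_zero,
          Set.indicator_of_notMem (by simp [Set.mem_Ioc, not_lt.mpr h2])]
      · rw [if_pos h1, if_neg h2, sub_zero, ENNReal.ofReal_one,
          Set.indicator_of_mem (by exact ⟨not_le.mp h2, h1⟩)]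
        rfl
    · have h2 : ¬ s₀ ≤ c := fun h => h1 (h.trans hcd.le)
      rw [if_neg h1, if_neg h2, sub_self, ENNReal.ofReal_zero,
        Set.indicator_of_notMem (by simp [Set.mem_Ioc, h1])]

/-- Nonuniqueness example: let `a : ℝ → ℝ` be continuous and nondecreasing,
`T > 0`, `s₀ ∈ (0,T]`, `w ∈ ℝ`, and set `Y t = w·e^{a(t)}·1_{t < s₀}`,
`Z t = -w·e^{a(t)}`. Let `μ_N` be the Lebesgue–Stieltjes measure of
`t ↦ 1_{[s₀,∞)}(t)` (a Stieltjes function `G`) and `μ_A` that of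
`t ↦ a(min(t, s₀))` (a Stieltjes function `Aa`). Then for every `t ∈ [0,T]`,
`Y t + ∫_{(t,T]} Z dμ_N = ∫_{(t,T]} Z dμ_A`. -/
theorem single_jump_bsde_nonuniqueness (a : ℝ → ℝ) (ha : Continuous a)
    (hmono : Monotone a) (T s₀ w : ℝ) (hT : 0 < T) (hs₀ : s₀ ∈ Set.Ioc 0 T)
    (Y Z : ℝ → ℝ)
    (hY : ∀ t, Y t = if t < s₀ then w * Real.exp (a t) else 0)
    (hZ : ∀ t, Z t = -(w * Real.exp (a t)))
    (G : StieltjesFunction ℝ) (hG : ∀ t, G t = if s₀ ≤ t then 1 else 0)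
    (Aa : StieltjesFunction ℝ) (hAa : ∀ t, Aa t = a (min t s₀)) :
    ∀ t ∈ Set.Icc (0 : ℝ) T,
      Y t + ∫ s in Set.Ioc t T, Z s ∂G.measure
        = ∫ s in Set.Ioc t T, Z s ∂Aa.measure := by
  obtain ⟨hs₀pos, hs₀T⟩ := hs₀
  have hGd : G.measure = Measure.dirac s₀ := stieltjes_step_eq_dirac G s₀ hG
  have hAacont : Continuous Aa := by
    have hfun : (Aa : ℝ → ℝ) = fun t => a (min t s₀) := funext hAa
    rw [hfun]
    exact ha.comp (continuous_id.min continuous_const)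
  intro t ht
  by_cases hts₀ : t < s₀
  · -- before the jump
    have hY' : Y t = w * Real.exp (a t) := by rw [hY, if_pos hts₀]
    -- the jump integral equals `Z s₀`
    have hNint : ∫ s in Set.Ioc t T, Z s ∂G.measure = Z s₀ := by
      rw [hGd]
      classical
      rw [setIntegral_dirac Z s₀ (Set.Ioc t T), if_pos ⟨hts₀, hs₀T⟩]
    -- the `Aa`-integral: restrict to `(t, s₀]` and change variables
    have hnull : Aa.measure (Set.Ioc s₀ T) = 0 := by
      rw [Aa.measure_Ioc, hAa, hAa, min_eq_right hs₀T, min_self, sub_self,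
        ENNReal.ofReal_zero]
    have hres : Aa.measure.restrict (Set.Ioc t T) = Aa.measure.restrict (Set.Ioc t s₀) := by
      refine Measure.restrict_congr_set ?_
      rw [MeasureTheory.ae_eq_set]
      constructor
      · refine measure_mono_null (fun s hs => ?_) hnull
        obtain ⟨⟨hts, hsT⟩, hnot⟩ := hs
        simp only [Set.mem_Ioc, not_and, not_le] at hnot
        exact ⟨hnot hts, hsT⟩
      · refine measure_mono_null (fun s hs => ?_) (measure_empty (μ := Aa.measure))
        obtain ⟨⟨hts, hss₀⟩, hnot⟩ := hs
        exact absurd ⟨hts, hss₀.trans hs₀T⟩ hnot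
    have hcongr : ∫ s in Set.Ioc t s₀, Z s ∂Aa.measure
        = ∫ s in Set.Ioc t s₀, (fun x => -(w * Real.exp x)) (Aa s) ∂Aa.measure := by
      refine setIntegral_congr_fun measurableSet_Ioc (fun s hs => ?_)
      simp only [hZ, hAa, min_eq_left hs.2]
    have hmap : ∫ s in Set.Ioc t s₀, (fun x => -(w * Real.exp x)) (Aa s) ∂Aa.measure
        = ∫ x in Set.Ioc (Aa t) (Aa s₀), -(w * Real.exp x) := by
      have h1 := MeasureTheory.integral_map (φ := (Aa : ℝ → ℝ))
        (μ := Aa.measure.restrict (Set.Ioc t s₀)) (f := fun x => -(w * Real.exp x))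
        hAacont.measurable.aemeasurable (Continuous.aestronglyMeasurable (by continuity))
      rw [stieltjes_map_restrict Aa hAacont hts₀.le] at h1
      exact h1.symm
    have hle : Aa t ≤ Aa s₀ := Aa.mono hts₀.le
    have hval : ∫ x in Set.Ioc (Aa t) (Aa s₀), -(w * Real.exp x)
        = -(w * (Real.exp (Aa s₀) - Real.exp (Aa t))) := by
      rw [← intervalIntegral.integral_of_le hle, intervalIntegral.integral_neg,
        intervalIntegral.integral_const_mul, integral_exp]
    have hAaint : ∫ s in Set.Ioc t T, Z s ∂Aa.measure
        = -(w * (Real.exp (Aa s₀) - Real.exp (Aa t))) := by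
      rw [hres, hcongr, hmap, hval]
    rw [hY', hNint, hAaint, hZ s₀, hAa, hAa, min_eq_left hts₀.le, min_self]
    ring
  · -- at or after the jump: everything vanishes
    push_neg at hts₀
    have hY' : Y t = 0 := by rw [hY, if_neg (not_lt.mpr hts₀)]
    have hN : G.measure.restrict (Set.Ioc t T) = 0 := by
      rw [Measure.restrict_eq_zero, hGd,
        Measure.dirac_apply' _ measurableSet_Ioc,
        Set.indicator_of_notMem (by simp [Set.mem_Ioc, not_lt.mpr hts₀])]
    have hA : Aa.measure.restrict (Set.Ioc t T) = 0 := by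
      rw [Measure.restrict_eq_zero, Aa.measure_Ioc, hAa, hAa, min_eq_right hs₀T,
        min_eq_right hts₀, sub_self, ENNReal.ofReal_zero]
    rw [hY', hN, hA, integral_zero_measure]
    simp
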